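/- The total degree (2n-1)-form β_1 + β_2 + ... + β_n on ℂ^{2n} satisfies d(β_1 + ... + β_n) = dx_1 ∧ dx_2 ∧ ... ∧ dx_n, i.e., the holomorphic n-form dx_1 ∧ ... ∧ dx_n is exact as a complex-valued differential form on the total de Rham complex. -/

import Mathlib

noncomputable section

/-- The underlying manifold `ℂ^{2n}` with coordinates `(x, y)`. -/
abbrev Pt (n : ℕ) := (Fin n → ℂ) × (Fin n → ℂ)

/-- Complex-valued constant-coefficient exterior forms on `ℂ^{2n}`: coefficients indexed
by subsets of the `4n` complexified coordinate covectors
`dx_k, dx̄_k, dy_k, dȳ_k` (0-indexed `k`). -/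
abbrev Lam (n : ℕ) := Finset (Fin (4 * n)) → ℂ

/-- The Koszul sign for merging two disjoint increasing index sets. -/
def wsign {n : ℕ} (s t : Finset (Fin (4 * n))) : ℂ :=
  (-1 : ℂ) ^ (((s ×ˢ t).filter fun ab => ab.2 < ab.1).card)

/-- Wedge product on `Lam n`. -/
def wedge {n : ℕ} (f g : Lam n) : Lam n := fun u =>
  ∑ s ∈ u.powerset, wsign s (u \ s) * f s * g (u \ s)

/-- The unit form `1`. -/
def oneF (n : ℕ) : Lam n := fun s => if s = ∅ then 1 else 0

/-- The basis covector with index `i`. -/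
def gen {n : ℕ} (i : Fin (4 * n)) : Lam n := fun s => if s = {i} then 1 else 0

/-- `genN n r j`: the covector `dx_j` (`r = 0`), `dx̄_j` (`r = 1`), `dy_j` (`r = 2`),
`dȳ_j` (`r = 3`); here `j` is the 0-indexed coordinate index. -/
def genN (n r j : ℕ) : Lam n := if h : 4 * j + r < 4 * n then gen ⟨4 * j + r, h⟩ else 0

/-- Wedge product of the covectors of type `r` with 0-indexed coordinate indices
`a, a+1, …, a+len-1`. -/
def prodG (n r a len : ℕ) : Lam n :=
  ((List.range' a len).map (genN n r)).foldr wedge (oneF n)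

/-- The real tangent direction `c ⬝ ∂/∂x_k`. -/
def ex (n : ℕ) (k : Fin n) (c : ℂ) : Pt n := (Pi.single k c, 0)

/-- The real tangent direction `c ⬝ ∂/∂y_k`. -/
def ey (n : ℕ) (k : Fin n) (c : ℂ) : Pt n := (0, Pi.single k c)

/-- Holomorphic Wirtinger derivative of a form-valued function along the complex
direction whose underlying real directions are `v` and `vI = i ⬝ v`. -/
def wirtP {n : ℕ} (F : Pt n → Lam n) (p : Pt n) (v vI : Pt n) : Lam n :=
  (2 : ℂ)⁻¹ • (fderiv ℝ F p v - Complex.I • fderiv ℝ F p vI)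

/-- Antiholomorphic Wirtinger derivative. -/
def wirtM {n : ℕ} (F : Pt n → Lam n) (p : Pt n) (v vI : Pt n) : Lam n :=
  (2 : ℂ)⁻¹ • (fderiv ℝ F p v + Complex.I • fderiv ℝ F p vI)

/-- The operator `∂`, the `(1,0)`-part of the exterior derivative:
`∂F = Σ_k dx_k ∧ ∂F/∂x_k + dy_k ∧ ∂F/∂y_k`. -/
def pdel {n : ℕ} (F : Pt n → Lam n) : Pt n → Lam n := fun p =>
  ∑ k : Fin n,
    (wedge (genN n 0 k) (wirtP F p (ex n k 1) (ex n k Complex.I)) +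
     wedge (genN n 2 k) (wirtP F p (ey n k 1) (ey n k Complex.I)))

/-- The operator `∂̄`, the `(0,1)`-part of the exterior derivative:
`∂̄F = Σ_k dx̄_k ∧ ∂F/∂x̄_k + dȳ_k ∧ ∂F/∂ȳ_k`. -/
def pdelBar {n : ℕ} (F : Pt n → Lam n) : Pt n → Lam n := fun p =>
  ∑ k : Fin n,
    (wedge (genN n 1 k) (wirtM F p (ex n k 1) (ex n k Complex.I)) +
     wedge (genN n 3 k) (wirtM F p (ey n k 1) (ey n k Complex.I)))

/-- The exterior derivative `d = ∂ + ∂̄`. -/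
def extD {n : ℕ} (F : Pt n → Lam n) : Pt n → Lam n := fun p => pdel F p + pdelBar F p

/-- The form `ω_{j+1}` (0-indexed `j`): `ω_1 = dy_1 + x̄_1 dx_1` and
`ω_k = dy_k + (x̄_{k-1} - x_k) dx_1` for `k ≥ 2`. -/
def omegaF {n : ℕ} (j : Fin n) : Pt n → Lam n := fun p =>
  genN n 2 j +
    (if (j : ℕ) = 0 then (starRingEnd ℂ) (p.1 j)
     else (starRingEnd ℂ) (p.1 ⟨(j : ℕ) - 1, lt_of_le_of_lt (Nat.sub_le _ _) j.isLt⟩)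
       - p.1 j) • genN n 0 0

/-- The form `ω_j` with 1-indexed `j ∈ {1, …, n}` (junk value `0` otherwise). -/
def omegaN (n j : ℕ) : Pt n → Lam n :=
  if h : j - 1 < n then omegaF ⟨j - 1, h⟩ else 0

/-- The complex conjugate form `ω̄_1 = dȳ_1 + x_1 dx̄_1`. -/
def omegaBar1 (n : ℕ) : Pt n → Lam n := fun p =>
  genN n 3 0 + (if h : 0 < n then p.1 ⟨0, h⟩ else 0) • genN n 1 0

/-- The form `β_k` (1-indexed `k`): `β_1 = ω̄_1 ∧ dx̄_2 ∧ ⋯ ∧ dx̄_{n-1}` and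
`β_k = dx_2 ∧ ⋯ ∧ dx_{k-1} ∧ ω_k ∧ dx̄_k ∧ ⋯ ∧ dx̄_{n-1}` for `2 ≤ k ≤ n`. -/
def betaF (n k : ℕ) : Pt n → Lam n :=
  if k = 1 then fun p => wedge (omegaBar1 n p) (prodG n 1 1 (n - 2))
  else fun p =>
    wedge (prodG n 0 1 (k - 2)) (wedge (omegaN n k p) (prodG n 1 (k - 1) (n - k)))

end

noncomputable section Aux
open Finset

variable {n : ℕ}

def eF {n : ℕ} (s : Finset (Fin (4 * n))) : Lam n := fun u => if u = s then 1 else 0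

lemma oneF_eq : oneF n = eF (∅ : Finset (Fin (4 * n))) := rfl

lemma gen_eq (i : Fin (4 * n)) : gen i = eF {i} := rfl

lemma wedge_eF (s t : Finset (Fin (4 * n))) :
    wedge (eF s) (eF t) = if Disjoint s t then wsign s t • eF (s ∪ t) else 0 := by
  funext u
  show (∑ s' ∈ u.powerset, wsign s' (u \ s') * eF s s' * eF t (u \ s')) = _
  have hcong : ∀ s' ∈ u.powerset,
      wsign s' (u \ s') * eF s s' * eF t (u \ s')
        = if s' = s then wsign s (u \ s) * (if u \ s = t then 1 else 0) else 0 := by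
    intro s' _
    unfold eF
    by_cases h : s' = s <;> simp [h]
  rw [Finset.sum_congr rfl hcong, Finset.sum_ite_eq' u.powerset s]
  by_cases hsub : s ⊆ u
  · by_cases ht : u \ s = t
    · have hd : Disjoint s t := ht ▸ Finset.disjoint_sdiff
      have hu : u = s ∪ t := by rw [← ht, Finset.union_sdiff_of_subset hsub]
      rw [if_pos (Finset.mem_powerset.mpr hsub), if_pos ht, if_pos hd, mul_one, ht,
        Pi.smul_apply, smul_eq_mul]
      show wsign s t = wsign s t * eF (s ∪ t) u
      rw [eF, if_pos hu, mul_one]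
    · -- LHS = 0
      simp only [Finset.mem_powerset, hsub, if_true, ht, if_false, mul_zero]
      split
      · rename_i hd
        rw [Pi.smul_apply, smul_eq_mul, eF]
        have : u ≠ s ∪ t := by
          intro hu
          apply ht
          rw [hu, Finset.union_sdiff_cancel_left hd]
        simp [this]
      · rfl
  · simp only [Finset.mem_powerset, hsub, if_false]
    split
    · rename_i hd
      rw [Pi.smul_apply, smul_eq_mul, eF]
      have : u ≠ s ∪ t := by
        intro hu; exact hsub (hu ▸ Finset.subset_union_left)
      simp [this]
    · rfl

lemma wedge_add_left (f g h : Lam n) : wedge (f + g) h = wedge f h + wedge g h := by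
  funext u
  simp [wedge, Pi.add_apply, add_mul, mul_add, Finset.sum_add_distrib]

lemma wedge_add_right (f g h : Lam n) : wedge f (g + h) = wedge f g + wedge f h := by
  funext u
  simp [wedge, Pi.add_apply, mul_add, Finset.sum_add_distrib]

lemma wedge_smul_left (c : ℂ) (f g : Lam n) : wedge (c • f) g = c • wedge f g := by
  funext u
  simp only [wedge, Pi.smul_apply, smul_eq_mul, Finset.mul_sum]
  apply Finset.sum_congr rfl
  intro s _
  ring

lemma wedge_smul_right (c : ℂ) (f g : Lam n) : wedge f (c • g) = c • wedge f g := by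
  funext u
  simp only [wedge, Pi.smul_apply, smul_eq_mul, Finset.mul_sum]
  apply Finset.sum_congr rfl
  intro s _
  ring

lemma wedge_zero (f : Lam n) : wedge f 0 = 0 := by
  funext u
  simp [wedge]

lemma zero_wedge (f : Lam n) : wedge 0 f = 0 := by
  funext u
  simp [wedge]

lemma wsign_singleton (i : Fin (4 * n)) (t : Finset (Fin (4 * n))) :
    wsign {i} t = (-1 : ℂ) ^ ((t.filter fun b => b < i).card) := by
  unfold wsign
  congr 1
  rw [Finset.singleton_product, Finset.filter_map, Finset.card_map]
  rfl

lemma wsign_card (s t : Finset (Fin (4 * n))) :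
    wsign s t = (-1 : ℂ) ^ (∑ a ∈ s, (t.filter fun b => b < a).card) := by
  unfold wsign
  congr 1
  rw [Finset.card_filter, Finset.sum_product]
  exact Finset.sum_congr rfl fun a _ => (Finset.card_filter _ _).symm


def idxSet (n r a len : ℕ) : Finset (Fin (4 * n)) :=
  Finset.univ.filter fun i => (i : ℕ) % 4 = r ∧ a ≤ (i : ℕ) / 4 ∧ (i : ℕ) / 4 < a + len

lemma mem_idxSet {r a len : ℕ} {i : Fin (4 * n)} :
    i ∈ idxSet n r a len ↔ (i : ℕ) % 4 = r ∧ a ≤ (i : ℕ) / 4 ∧ (i : ℕ) / 4 < a + len := by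
  simp [idxSet]

lemma genN_eq {r j : ℕ} (h : 4 * j + r < 4 * n) : genN n r j = eF {(⟨4 * j + r, h⟩ : Fin (4 * n))} := by
  rw [genN, dif_pos h, gen_eq]

lemma prodG_eq {r a len : ℕ} (hr : r < 4) (h : a + len ≤ n) :
    prodG n r a len = eF (idxSet n r a len) := by
  induction len generalizing a with
  | zero =>
    have : idxSet n r a 0 = ∅ := by
      ext i; simp only [mem_idxSet, Finset.notMem_empty, iff_false]; omega
    rw [this, prodG]
    simp [oneF_eq]
  | succ len ih =>
    have ha : 4 * a + r < 4 * n := by omega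
    have hstep : prodG n r a (len + 1) = wedge (genN n r a) (prodG n r (a + 1) len) := by
      rw [prodG, prodG, List.range'_succ, List.map_cons, List.foldr_cons]
    rw [hstep, ih (by omega), genN_eq ha, wedge_eF]
    have hd : Disjoint {(⟨4 * a + r, ha⟩ : Fin (4 * n))} (idxSet n r (a + 1) len) := by
      rw [Finset.disjoint_singleton_left, mem_idxSet]
      simp only [Fin.val_mk]
      omega
    rw [if_pos hd, wsign_singleton]
    have hfe : ((idxSet n r (a + 1) len).filter fun b => b < (⟨4 * a + r, ha⟩ : Fin (4 * n))) = ∅ := by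
      rw [Finset.filter_eq_empty_iff]
      intro b hb
      rw [mem_idxSet] at hb
      simp only [Fin.lt_def, Fin.val_mk, not_lt]
      omega
    rw [hfe]
    simp only [Finset.card_empty, pow_zero, one_smul]
    have hset : ({(⟨4 * a + r, ha⟩ : Fin (4 * n))} : Finset (Fin (4 * n))) ∪ idxSet n r (a + 1) len
        = idxSet n r a (len + 1) := by
      ext i
      simp only [Finset.mem_union, Finset.mem_singleton, mem_idxSet, Fin.ext_iff, Fin.val_mk]
      omega
    rw [hset]


/-! ### Analysis -/

def coordF (n j : ℕ) : Pt n → ℂ := fun p => if h : j < n then p.1 ⟨j, h⟩ else 0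

lemma coordF_eq {j : ℕ} (hj : j < n) : coordF n j = fun p : Pt n => p.1 ⟨j, hj⟩ := by
  funext p; rw [coordF, dif_pos hj]

def coordCLM (n : ℕ) (j : Fin n) : Pt n →L[ℝ] ℂ :=
  (ContinuousLinearMap.proj (R := ℝ) (φ := fun _ : Fin n => ℂ) j).comp
    (ContinuousLinearMap.fst ℝ (Fin n → ℂ) (Fin n → ℂ))

lemma coordCLM_apply (j : Fin n) (p : Pt n) : coordCLM n j p = p.1 j := rfl

def coordBCLM (n : ℕ) (j : Fin n) : Pt n →L[ℝ] ℂ :=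
  (Complex.conjCLE.toContinuousLinearMap).comp (coordCLM n j)

lemma coordBCLM_apply (j : Fin n) (p : Pt n) :
    coordBCLM n j p = (starRingEnd ℂ) (p.1 j) := rfl

lemma fderiv_smulRight (c : Pt n →L[ℝ] ℂ) (η : Lam n) (p v : Pt n) :
    fderiv ℝ (fun q : Pt n => c q • η) p v = c v • η := by
  have h : fderiv ℝ (⇑(c.smulRight η)) p = c.smulRight η := (c.smulRight η).fderiv
  have h2 : (fun q : Pt n => c q • η) = ⇑(c.smulRight η) := rfl
  rw [h2, h]
  rfl

lemma diff_smulRight (c : Pt n →L[ℝ] ℂ) (η : Lam n) :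
    Differentiable ℝ (fun q : Pt n => c q • η) :=
  (c.smulRight η).differentiable

lemma ex_fst (k : Fin n) (c : ℂ) (j : Fin n) : (ex n k c).1 j = if j = k then c else 0 :=
  Pi.single_apply k c j

lemma ey_fst (k : Fin n) (c : ℂ) (j : Fin n) : (ey n k c).1 j = 0 := rfl


lemma extD_const (C : Lam n) : extD (fun _ : Pt n => C) = fun _ => (0 : Lam n) := by
  funext p
  show pdel _ p + pdelBar _ p = 0
  have hw : ∀ v : Pt n, fderiv ℝ (fun _ : Pt n => C) p v = 0 := by
    intro v; rw [fderiv_fun_const]; rfl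
  unfold pdel pdelBar wirtP wirtM
  simp only [hw, smul_zero, sub_zero, add_zero, zero_sub, neg_zero, zero_add, wedge_zero,
    Finset.sum_const_zero]

lemma extD_add (F G : Pt n → Lam n) (hF : Differentiable ℝ F) (hG : Differentiable ℝ G) :
    extD (fun p => F p + G p) = fun p => extD F p + extD G p := by
  funext p
  have hfd : ∀ v : Pt n, fderiv ℝ (fun q => F q + G q) p v = fderiv ℝ F p v + fderiv ℝ G p v := by
    intro v; rw [fderiv_fun_add (hF p) (hG p)]; rfl
  show pdel _ p + pdelBar _ p = (pdel F p + pdelBar F p) + (pdel G p + pdelBar G p)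
  have hP : pdel (fun q => F q + G q) p = pdel F p + pdel G p := by
    unfold pdel wirtP
    rw [← Finset.sum_add_distrib]
    apply Finset.sum_congr rfl
    intro k _
    simp only [hfd, smul_add, smul_sub]
    have hw : ∀ f a b c d : Lam n, wedge f (a + b - (c + d)) = wedge f (a - c) + wedge f (b - d) := by
      intro f a b c d
      rw [show a + b - (c + d) = (a - c) + (b - d) from by abel, wedge_add_right]
    simp only [hw]
    abel
  have hB : pdelBar (fun q => F q + G q) p = pdelBar F p + pdelBar G p := by
    unfold pdelBar wirtM
    rw [← Finset.sum_add_distrib]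
    apply Finset.sum_congr rfl
    intro k _
    simp only [hfd, smul_add]
    have hw : ∀ f a b c d : Lam n, wedge f (a + b + (c + d)) = wedge f (a + c) + wedge f (b + d) := by
      intro f a b c d
      rw [show a + b + (c + d) = (a + c) + (b + d) from by abel, wedge_add_right]
    simp only [hw]
    abel
  rw [hP, hB]
  abel

lemma extD_sum (m : ℕ) (F : ℕ → Pt n → Lam n)
    (hF : ∀ k, k < m → Differentiable ℝ (F k)) :
    extD (fun p => ∑ k ∈ Finset.range m, F k p)
      = fun p => ∑ k ∈ Finset.range m, extD (F k) p := by
  induction m with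
  | zero => simpa using extD_const (0 : Lam n)
  | succ m ih =>
    have h1 : (fun p : Pt n => ∑ k ∈ Finset.range (m + 1), F k p)
        = fun p => (∑ k ∈ Finset.range m, F k p) + F m p := by
      funext p; rw [Finset.sum_range_succ]
    rw [h1, extD_add _ _ (Differentiable.fun_sum fun k hk =>
        hF k (by simpa using Finset.mem_range.mp hk |>.trans_le (Nat.le_succ m)))
      (hF m (Nat.lt_succ_self m))]
    funext p
    rw [ih (fun k hk => hF k (hk.trans (Nat.lt_succ_self m))), Finset.sum_range_succ]


lemma two_inv_smul_self_add (η : Lam n) : (2:ℂ)⁻¹ • (η + η) = η := by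
  rw [← two_smul ℂ η, smul_smul, inv_mul_cancel₀ (two_ne_zero), one_smul]

lemma extD_coord_smul {j : ℕ} (hj : j < n) (η : Lam n) :
    extD (fun q : Pt n => coordF n j q • η) = fun _ => wedge (genN n 0 j) η := by
  funext p
  have hfd : ∀ v : Pt n, fderiv ℝ (fun q : Pt n => coordF n j q • η) p v = v.1 ⟨j, hj⟩ • η := by
    intro v
    rw [coordF_eq hj]
    exact fderiv_smulRight (coordCLM n ⟨j, hj⟩) η p v
  show pdel _ p + pdelBar _ p = _
  have hB : pdelBar (fun q : Pt n => coordF n j q • η) p = 0 := by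
    unfold pdelBar wirtM
    apply Finset.sum_eq_zero
    intro k _
    simp only [hfd, ex_fst, ey_fst, zero_smul, smul_zero, add_zero]
    by_cases h : (⟨j, hj⟩ : Fin n) = k
    · simp only [if_pos h, one_smul, smul_smul, Complex.I_mul_I, neg_one_smul]
      rw [add_neg_cancel, smul_zero, wedge_zero, wedge_zero, add_zero]
    · simp only [if_neg h, zero_smul, smul_zero, add_zero, wedge_zero, zero_add]
  have hP : pdel (fun q : Pt n => coordF n j q • η) p = wedge (genN n 0 j) η := by
    unfold pdel wirtP
    rw [Finset.sum_eq_single (⟨j, hj⟩ : Fin n)]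
    · simp only [hfd, ex_fst, ey_fst, if_pos rfl, zero_smul, smul_zero, sub_zero, one_smul,
        smul_smul, if_true, Complex.I_mul_I, neg_one_smul, sub_neg_eq_add, wedge_zero, add_zero,
        two_inv_smul_self_add, Fin.val_mk]
    · intro b _ hb
      simp only [hfd, ex_fst, ey_fst, if_neg (Ne.symm hb), zero_smul, smul_zero,
        sub_zero, wedge_zero, add_zero, sub_self]
    · intro h
      exact absurd (Finset.mem_univ _) h
  rw [hP, hB, add_zero]

lemma extD_coordB_smul {j : ℕ} (hj : j < n) (η : Lam n) :
    extD (fun q : Pt n => (starRingEnd ℂ) (coordF n j q) • η) = fun _ => wedge (genN n 1 j) η := by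
  funext p
  have hfd : ∀ v : Pt n,
      fderiv ℝ (fun q : Pt n => (starRingEnd ℂ) (coordF n j q) • η) p v
        = (starRingEnd ℂ) (v.1 ⟨j, hj⟩) • η := by
    intro v
    rw [coordF_eq hj]
    exact fderiv_smulRight (coordBCLM n ⟨j, hj⟩) η p v
  show pdel _ p + pdelBar _ p = _
  have hP : pdel (fun q : Pt n => (starRingEnd ℂ) (coordF n j q) • η) p = 0 := by
    unfold pdel wirtP
    apply Finset.sum_eq_zero
    intro k _
    simp only [hfd, ex_fst, ey_fst, apply_ite (starRingEnd ℂ), map_one, map_zero,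
      Complex.conj_I, zero_smul, smul_zero, sub_zero]
    by_cases h : (⟨j, hj⟩ : Fin n) = k
    · simp only [if_pos h, one_smul, smul_smul, mul_neg, Complex.I_mul_I, neg_neg, one_smul]
      rw [sub_self, smul_zero, wedge_zero, wedge_zero, add_zero]
    · simp only [if_neg h, zero_smul, smul_zero, sub_zero, wedge_zero, zero_add]
  have hB : pdelBar (fun q : Pt n => (starRingEnd ℂ) (coordF n j q) • η) p = wedge (genN n 1 j) η := by
    unfold pdelBar wirtM
    rw [Finset.sum_eq_single (⟨j, hj⟩ : Fin n)]
    · simp only [hfd, ex_fst, ey_fst, apply_ite (starRingEnd ℂ), map_one, map_zero,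
        Complex.conj_I, if_pos rfl, if_true, zero_smul, smul_zero, add_zero, one_smul,
        smul_smul, mul_neg, Complex.I_mul_I, neg_neg, one_smul, wedge_zero,
        two_inv_smul_self_add, Fin.val_mk]
    · intro b _ hb
      simp only [hfd, ex_fst, ey_fst, apply_ite (starRingEnd ℂ), map_zero,
        if_neg (Ne.symm hb), zero_smul, smul_zero, add_zero, wedge_zero, zero_add]
    · intro h
      exact absurd (Finset.mem_univ _) h
  rw [hP, hB, zero_add]

lemma diff_coord_smul {j : ℕ} (hj : j < n) (η : Lam n) :
    Differentiable ℝ (fun q : Pt n => coordF n j q • η) := by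
  rw [coordF_eq hj]
  exact diff_smulRight (coordCLM n ⟨j, hj⟩) η

lemma diff_coordB_smul {j : ℕ} (hj : j < n) (η : Lam n) :
    Differentiable ℝ (fun q : Pt n => (starRingEnd ℂ) (coordF n j q) • η) := by
  rw [coordF_eq hj]
  exact diff_smulRight (coordBCLM n ⟨j, hj⟩) η


/-! ### Normal forms -/

lemma wedge_neg_right (f g : Lam n) : wedge f (-g) = -wedge f g := by
  funext u
  simp only [wedge, Pi.neg_apply, mul_neg, ← Finset.sum_neg_distrib]

lemma idxSet_zero {r a : ℕ} : idxSet n r a 0 = ∅ := by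
  ext i; simp only [mem_idxSet, Finset.notMem_empty, iff_false]; omega

lemma card_idxSet {r a len : ℕ} (hr : r < 4) (h : a + len ≤ n) :
    (idxSet n r a len).card = len := by
  induction len generalizing a with
  | zero => rw [idxSet_zero]; rfl
  | succ len ih =>
    have ha : 4 * a + r < 4 * n := by omega
    have hins : idxSet n r a (len + 1) = insert ⟨4 * a + r, ha⟩ (idxSet n r (a + 1) len) := by
      ext i
      simp only [mem_idxSet, Finset.mem_insert, Fin.ext_iff, Fin.val_mk]
      omega
    rw [hins, Finset.card_insert_of_notMem
      (by rw [mem_idxSet]; simp only [Fin.val_mk]; omega), ih (by omega)]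

def etaX (n K : ℕ) : Lam n :=
  wedge (prodG n 0 1 (K - 2)) (wedge (genN n 0 0) (prodG n 1 (K - 1) (n - K)))

def Wset (n m : ℕ) : Finset (Fin (4 * n)) :=
  idxSet n 0 0 1 ∪ idxSet n 0 1 (m - 1) ∪ idxSet n 1 (m - 1) (n - m)

lemma etaX_eq {K : ℕ} (hK2 : 2 ≤ K) (hKn : K ≤ n) :
    etaX n K = ((-1 : ℂ) ^ (K - 2)) •
      eF (idxSet n 0 1 (K - 2) ∪ (idxSet n 0 0 1 ∪ idxSet n 1 (K - 1) (n - K))) := by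
  have h0 : 4 * 0 + 0 < 4 * n := by omega
  rw [etaX, prodG_eq (by omega) (by omega), prodG_eq (by omega) (by omega), genN_eq h0]
  have hsing : ({(⟨4 * 0 + 0, h0⟩ : Fin (4 * n))} : Finset (Fin (4 * n))) = idxSet n 0 0 1 := by
    ext i
    simp only [Finset.mem_singleton, mem_idxSet, Fin.ext_iff, Fin.val_mk]
    omega
  rw [hsing, wedge_eF]
  have hd1 : Disjoint (idxSet n 0 0 1) (idxSet n 1 (K - 1) (n - K)) := by
    rw [Finset.disjoint_left]
    intro i hi hi'
    rw [mem_idxSet] at hi hi'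
    omega
  rw [if_pos hd1, wsign_card]
  have hz : (∑ a ∈ idxSet n 0 0 1, ((idxSet n 1 (K - 1) (n - K)).filter fun b => b < a).card) = 0 := by
    apply Finset.sum_eq_zero
    intro a ha
    rw [mem_idxSet] at ha
    rw [Finset.card_eq_zero, Finset.filter_eq_empty_iff]
    intro b hb
    rw [mem_idxSet] at hb
    simp only [Fin.lt_def, not_lt]
    omega
  rw [hz, pow_zero, one_smul, wedge_eF]
  have hd2 : Disjoint (idxSet n 0 1 (K - 2)) (idxSet n 0 0 1 ∪ idxSet n 1 (K - 1) (n - K)) := by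
    rw [Finset.disjoint_left]
    intro i hi hi'
    rw [mem_idxSet] at hi
    rw [Finset.mem_union, mem_idxSet, mem_idxSet] at hi'
    omega
  rw [if_pos hd2, wsign_card]
  have hcount : (∑ a ∈ idxSet n 0 1 (K - 2),
      ((idxSet n 0 0 1 ∪ idxSet n 1 (K - 1) (n - K)).filter fun b => b < a).card) = K - 2 := by
    have h1 : ∀ a ∈ idxSet n 0 1 (K - 2),
        (((idxSet n 0 0 1 ∪ idxSet n 1 (K - 1) (n - K)).filter fun b => b < a).card) = 1 := by
      intro a ha
      rw [mem_idxSet] at ha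
      have he : ((idxSet n 0 0 1 ∪ idxSet n 1 (K - 1) (n - K)).filter fun b => b < a)
          = idxSet n 0 0 1 := by
        ext i
        simp only [Finset.mem_filter, Finset.mem_union, mem_idxSet, Fin.lt_def]
        omega
      rw [he, card_idxSet (by omega) (by omega)]
    rw [Finset.sum_congr rfl h1, Finset.sum_const, card_idxSet (by omega) (by omega),
      smul_eq_mul, mul_one]
  rw [hcount]


lemma term_bar {K : ℕ} (hK2 : 2 ≤ K) (hKn : K ≤ n) :
    wedge (genN n 1 (K - 2)) (etaX n K) = -eF (Wset n (K - 1)) := by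
  have hgen : 4 * (K - 2) + 1 < 4 * n := by omega
  rw [etaX_eq hK2 hKn, wedge_smul_right, genN_eq hgen, wedge_eF]
  have hd : Disjoint ({(⟨4 * (K - 2) + 1, hgen⟩ : Fin (4 * n))} : Finset (Fin (4 * n)))
      (idxSet n 0 1 (K - 2) ∪ (idxSet n 0 0 1 ∪ idxSet n 1 (K - 1) (n - K))) := by
    rw [Finset.disjoint_singleton_left]
    simp only [Finset.mem_union, mem_idxSet, Fin.val_mk, not_or]
    refine ⟨by omega, by omega, by omega⟩
  rw [if_pos hd, wsign_singleton]
  have hfil : (((idxSet n 0 1 (K - 2) ∪ (idxSet n 0 0 1 ∪ idxSet n 1 (K - 1) (n - K)))).filter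
      fun b => b < (⟨4 * (K - 2) + 1, hgen⟩ : Fin (4 * n)))
      = idxSet n 0 0 1 ∪ idxSet n 0 1 (K - 2) := by
    ext i
    simp only [Finset.mem_filter, Finset.mem_union, mem_idxSet, Fin.lt_def, Fin.val_mk]
    omega
  have hdu : Disjoint (idxSet n 0 0 1) (idxSet n 0 1 (K - 2)) := by
    rw [Finset.disjoint_left]
    intro i hi hi'
    rw [mem_idxSet] at hi hi'
    omega
  rw [hfil, Finset.card_union_of_disjoint hdu, card_idxSet (by omega) (by omega),
    card_idxSet (by omega) (by omega), smul_smul, ← pow_add]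
  have hodd : ((-1 : ℂ)) ^ ((K - 2) + (1 + (K - 2))) = -1 := Odd.neg_one_pow ⟨K - 2, by omega⟩
  rw [hodd, neg_one_smul]
  have hset : ({(⟨4 * (K - 2) + 1, hgen⟩ : Fin (4 * n))} : Finset (Fin (4 * n)))
      ∪ (idxSet n 0 1 (K - 2) ∪ (idxSet n 0 0 1 ∪ idxSet n 1 (K - 1) (n - K)))
      = Wset n (K - 1) := by
    ext i
    simp only [Wset, Finset.mem_union, Finset.mem_singleton, mem_idxSet, Fin.ext_iff, Fin.val_mk]
    omega
  rw [hset]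

lemma term_x {K : ℕ} (hK2 : 2 ≤ K) (hKn : K ≤ n) :
    wedge (genN n 0 (K - 1)) (etaX n K) = -eF (Wset n K) := by
  have hgen : 4 * (K - 1) + 0 < 4 * n := by omega
  rw [etaX_eq hK2 hKn, wedge_smul_right, genN_eq hgen, wedge_eF]
  have hd : Disjoint ({(⟨4 * (K - 1) + 0, hgen⟩ : Fin (4 * n))} : Finset (Fin (4 * n)))
      (idxSet n 0 1 (K - 2) ∪ (idxSet n 0 0 1 ∪ idxSet n 1 (K - 1) (n - K))) := by
    rw [Finset.disjoint_singleton_left]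
    simp only [Finset.mem_union, mem_idxSet, Fin.val_mk, not_or]
    refine ⟨by omega, by omega, by omega⟩
  rw [if_pos hd, wsign_singleton]
  have hfil : (((idxSet n 0 1 (K - 2) ∪ (idxSet n 0 0 1 ∪ idxSet n 1 (K - 1) (n - K)))).filter
      fun b => b < (⟨4 * (K - 1) + 0, hgen⟩ : Fin (4 * n)))
      = idxSet n 0 0 1 ∪ idxSet n 0 1 (K - 2) := by
    ext i
    simp only [Finset.mem_filter, Finset.mem_union, mem_idxSet, Fin.lt_def, Fin.val_mk]
    omega
  have hdu : Disjoint (idxSet n 0 0 1) (idxSet n 0 1 (K - 2)) := by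
    rw [Finset.disjoint_left]
    intro i hi hi'
    rw [mem_idxSet] at hi hi'
    omega
  rw [hfil, Finset.card_union_of_disjoint hdu, card_idxSet (by omega) (by omega),
    card_idxSet (by omega) (by omega), smul_smul, ← pow_add]
  have hodd : ((-1 : ℂ)) ^ ((K - 2) + (1 + (K - 2))) = -1 := Odd.neg_one_pow ⟨K - 2, by omega⟩
  rw [hodd, neg_one_smul]
  have hset : ({(⟨4 * (K - 1) + 0, hgen⟩ : Fin (4 * n))} : Finset (Fin (4 * n)))
      ∪ (idxSet n 0 1 (K - 2) ∪ (idxSet n 0 0 1 ∪ idxSet n 1 (K - 1) (n - K)))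
      = Wset n K := by
    ext i
    simp only [Wset, Finset.mem_union, Finset.mem_singleton, mem_idxSet, Fin.ext_iff, Fin.val_mk]
    omega
  rw [hset]

lemma term0 (hn : 2 ≤ n) :
    wedge (genN n 0 0) (wedge (genN n 1 0) (prodG n 1 1 (n - 2))) = eF (Wset n 1) := by
  have h1 : 4 * 0 + 1 < 4 * n := by omega
  have h0 : 4 * 0 + 0 < 4 * n := by omega
  rw [prodG_eq (by omega) (by omega), genN_eq h1, genN_eq h0, wedge_eF]
  have hd1 : Disjoint ({(⟨4 * 0 + 1, h1⟩ : Fin (4 * n))} : Finset (Fin (4 * n)))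
      (idxSet n 1 1 (n - 2)) := by
    rw [Finset.disjoint_singleton_left, mem_idxSet]
    simp only [Fin.val_mk]
    omega
  rw [if_pos hd1, wsign_singleton]
  have hf1 : ((idxSet n 1 1 (n - 2)).filter fun b => b < (⟨4 * 0 + 1, h1⟩ : Fin (4 * n))) = ∅ := by
    rw [Finset.filter_eq_empty_iff]
    intro b hb
    rw [mem_idxSet] at hb
    simp only [Fin.lt_def, Fin.val_mk, not_lt]
    omega
  rw [hf1, Finset.card_empty, pow_zero, one_smul, wedge_eF]
  have hd0 : Disjoint ({(⟨4 * 0 + 0, h0⟩ : Fin (4 * n))} : Finset (Fin (4 * n)))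
      ({(⟨4 * 0 + 1, h1⟩ : Fin (4 * n))} ∪ idxSet n 1 1 (n - 2)) := by
    rw [Finset.disjoint_singleton_left]
    simp only [Finset.mem_union, Finset.mem_singleton, mem_idxSet, Fin.ext_iff, Fin.val_mk, not_or]
    exact ⟨by omega, by omega⟩
  rw [if_pos hd0, wsign_singleton]
  have hf0 : ((({(⟨4 * 0 + 1, h1⟩ : Fin (4 * n))} : Finset (Fin (4 * n))) ∪ idxSet n 1 1 (n - 2)).filter
      fun b => b < (⟨4 * 0 + 0, h0⟩ : Fin (4 * n))) = ∅ := by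
    rw [Finset.filter_eq_empty_iff]
    intro b hb
    rw [Finset.mem_union, Finset.mem_singleton, Fin.ext_iff] at hb
    rw [mem_idxSet] at hb
    simp only [Fin.lt_def, Fin.val_mk, not_lt]
    omega
  rw [hf0, Finset.card_empty, pow_zero, one_smul]
  have hset : ({(⟨4 * 0 + 0, h0⟩ : Fin (4 * n))} : Finset (Fin (4 * n)))
      ∪ ({(⟨4 * 0 + 1, h1⟩ : Fin (4 * n))} ∪ idxSet n 1 1 (n - 2)) = Wset n 1 := by
    ext i
    simp only [Wset, Finset.mem_union, Finset.mem_singleton, mem_idxSet, Fin.ext_iff, Fin.val_mk]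
    omega
  rw [hset]

lemma Wset_last : Wset n n = idxSet n 0 0 n := by
  ext i
  simp only [Wset, Finset.mem_union, mem_idxSet]
  omega


/-! ### Decomposition of the beta forms -/

lemma beta1_decomp :
    betaF n 1 = fun p => wedge (genN n 3 0) (prodG n 1 1 (n - 2))
      + coordF n 0 p • wedge (genN n 1 0) (prodG n 1 1 (n - 2)) := by
  funext p
  simp only [betaF, if_pos rfl, if_true, omegaBar1]
  rw [wedge_add_left, wedge_smul_left]
  rfl

lemma betaK_decomp {K : ℕ} (hK2 : 2 ≤ K) (hKn : K ≤ n) :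
    betaF n K = fun p =>
      wedge (prodG n 0 1 (K - 2)) (wedge (genN n 2 (K - 1)) (prodG n 1 (K - 1) (n - K)))
      + ((starRingEnd ℂ) (coordF n (K - 2) p) • etaX n K
         + coordF n (K - 1) p • (-etaX n K)) := by
  have hK1 : K - 1 < n := by omega
  funext p
  simp only [betaF, if_neg (show ¬ K = 1 by omega), omegaN, dif_pos hK1, omegaF]
  rw [if_neg (show ¬((⟨K - 1, hK1⟩ : Fin n) : ℕ) = 0 from by simp only [Fin.val_mk]; omega)]
  rw [wedge_add_left, wedge_add_right, wedge_smul_left, wedge_smul_right]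
  rw [sub_smul, sub_eq_add_neg, ← smul_neg]
  simp only [coordF_eq (show K - 2 < n from by omega), coordF_eq (show K - 1 < n from by omega)]
  rw [etaX]
  rfl

/-! ### extD of the beta forms -/

lemma extD_betaF_one (hn : 2 ≤ n) : extD (betaF n 1) = fun _ => eF (Wset n 1) := by
  rw [beta1_decomp]
  have h := extD_add (fun _ : Pt n => wedge (genN n 3 0) (prodG n 1 1 (n - 2)))
      (fun p : Pt n => coordF n 0 p • wedge (genN n 1 0) (prodG n 1 1 (n - 2)))
      (differentiable_const _) (diff_coord_smul (by omega) _)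
  rw [h]
  funext p
  simp only [extD_const, extD_coord_smul (show 0 < n by omega)]
  rw [zero_add, term0 hn]

lemma extD_betaF_ge {K : ℕ} (hK2 : 2 ≤ K) (hKn : K ≤ n) :
    extD (betaF n K) = fun _ => eF (Wset n K) - eF (Wset n (K - 1)) := by
  rw [betaK_decomp hK2 hKn]
  have h := extD_add
      (fun _ : Pt n => wedge (prodG n 0 1 (K - 2)) (wedge (genN n 2 (K - 1)) (prodG n 1 (K - 1) (n - K))))
      (fun p : Pt n => (starRingEnd ℂ) (coordF n (K - 2) p) • etaX n K
         + coordF n (K - 1) p • (-etaX n K))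
      (differentiable_const _)
      ((diff_coordB_smul (show K - 2 < n by omega) _).add (diff_coord_smul (show K - 1 < n by omega) _))
  rw [h]
  have h2 := extD_add
      (fun p : Pt n => (starRingEnd ℂ) (coordF n (K - 2) p) • etaX n K)
      (fun p : Pt n => coordF n (K - 1) p • (-etaX n K))
      (diff_coordB_smul (show K - 2 < n by omega) _) (diff_coord_smul (show K - 1 < n by omega) _)
  funext p
  simp only [extD_const, h2, extD_coordB_smul (show K - 2 < n by omega),
    extD_coord_smul (show K - 1 < n by omega)]
  rw [zero_add, wedge_neg_right, term_bar hK2 hKn, term_x hK2 hKn]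
  abel

end Aux

/-- the total form `β_1 + ⋯ + β_n` of degree `2n - 1` satisfies
`d(β_1 + ⋯ + β_n) = dx_1 ∧ ⋯ ∧ dx_n`, so the holomorphic `n`-form
`dx_1 ∧ ⋯ ∧ dx_n` is exact in the de Rham complex of complex-valued forms. -/
theorem d_beta_sum (n : ℕ) (hn : 2 ≤ n) :
    extD (fun p => ∑ k ∈ Finset.range n, betaF n (k + 1) p) = fun _ => prodG n 0 0 n := by
  have hdiff : ∀ k, k < n → Differentiable ℝ (betaF n (k + 1)) := by
    intro k hk
    rcases Nat.eq_zero_or_pos k with rfl | hk1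
    · rw [show (0:ℕ) + 1 = 1 from rfl, beta1_decomp]
      exact (differentiable_const _).add (diff_coord_smul (by omega) _)
    · rw [betaK_decomp (show 2 ≤ k + 1 by omega) (show k + 1 ≤ n by omega)]
      exact (differentiable_const _).add
        ((diff_coordB_smul (show k + 1 - 2 < n by omega) _).add
          (diff_coord_smul (show k + 1 - 1 < n by omega) _))
  have hs := extD_sum n (fun k => betaF n (k + 1)) hdiff
  rw [hs]
  funext p
  have hterm : ∀ k ∈ Finset.range n, extD (betaF n (k + 1)) p
      = (if k = 0 then eF (Wset n 1) else eF (Wset n (k + 1)) - eF (Wset n k)) := by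
    intro k hk
    rw [Finset.mem_range] at hk
    rcases Nat.eq_zero_or_pos k with rfl | hk1
    · rw [if_pos rfl, show (0:ℕ) + 1 = 1 from rfl, extD_betaF_one hn]
    · rw [if_neg (by omega), extD_betaF_ge (show 2 ≤ k + 1 by omega) (show k + 1 ≤ n by omega)]
      simp only [Nat.add_sub_cancel]
  rw [Finset.sum_congr rfl hterm]
  have hsum : ∀ m, m + 1 ≤ n →
      (∑ k ∈ Finset.range (m + 1),
        (if k = 0 then eF (Wset n 1) else eF (Wset n (k + 1)) - eF (Wset n k)))
      = eF (Wset n (m + 1)) := by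
    intro m
    induction m with
    | zero => intro _; rw [Finset.sum_range_one, if_pos rfl]
    | succ m ih =>
      intro h
      rw [Finset.sum_range_succ, ih (by omega), if_neg (by omega)]
      abel
  obtain ⟨m, rfl⟩ : ∃ m, n = m + 1 := ⟨n - 1, by omega⟩
  rw [hsum m (le_refl _), Wset_last, ← prodG_eq (by omega) (by omega)]
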